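/- For every unsigned permutation π of size n, all positive weights w_ρ and w_τ, and every rearrangement model M ∈ {M1, M2, M3, M4, M5, M6} (with unsigned operations), the weighted sorting distance satisfies d^w_M(π) ≥ min{w_ρ/2, w_τ/3} · b(π), where b(π) is the number of unsigned-reversal breakpoints of π. -/

import Mathlib

/-- The four kinds of rearrangement operations considered:
reversals, transpositions, inverse transpositions and revrevs. -/
inductive RearrOp : Type
  | rev
  | transp
  | invtransp
  | revrev
deriving DecidableEq

/-- `π` is (the extended version of) a signed permutation of size `n`:
`π 0 = +0`, `π (n+1) = +(n+1)`, and on positions `1, …, n` the values have pairwise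
distinct absolute values lying in `{1, …, n}`. -/
def IsSPerm (n : ℕ) (π : ℕ → ℤ) : Prop :=
  π 0 = 0 ∧ π (n + 1) = (n : ℤ) + 1 ∧
  (∀ i : ℕ, 1 ≤ i → i ≤ n → 1 ≤ |π i| ∧ |π i| ≤ (n : ℤ)) ∧
  (∀ i j : ℕ, 1 ≤ i → i ≤ n → 1 ≤ j → j ≤ n → |π i| = |π j| → i = j)

/-- `π` is (the extended version of) an unsigned permutation of size `n`. -/
def IsUPerm (n : ℕ) (π : ℕ → ℕ) : Prop :=
  π 0 = 0 ∧ π (n + 1) = n + 1 ∧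
  (∀ i : ℕ, 1 ≤ i → i ≤ n → 1 ≤ π i ∧ π i ≤ n) ∧
  (∀ i j : ℕ, 1 ≤ i → i ≤ n → 1 ≤ j → j ≤ n → π i = π j → i = j)

/-- Signed reversal `ρ(i,j)`, `1 ≤ i ≤ j ≤ n`: replaces `(π_i … π_j)` by `(−π_j … −π_i)`. -/
def SRev (n : ℕ) (π π' : ℕ → ℤ) : Prop :=
  ∃ i j : ℕ, 1 ≤ i ∧ i ≤ j ∧ j ≤ n ∧
    (∀ p : ℕ, i ≤ p → p ≤ j → π' p = - π (i + j - p)) ∧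
    (∀ p : ℕ, p < i ∨ j < p → π' p = π p)

/-- Transposition `τ(i,j,k)`, `1 ≤ i < j < k ≤ n+1`: exchanges the adjacent segments
`(π_i … π_{j−1})` and `(π_j … π_{k−1})`. -/
def STransp (n : ℕ) (π π' : ℕ → ℤ) : Prop :=
  ∃ i j k : ℕ, 1 ≤ i ∧ i < j ∧ j < k ∧ k ≤ n + 1 ∧
    (∀ p : ℕ, i ≤ p → p < i + (k - j) → π' p = π (p + (j - i))) ∧
    (∀ p : ℕ, i + (k - j) ≤ p → p < k → π' p = π (p - (k - j))) ∧
    (∀ p : ℕ, p < i ∨ k ≤ p → π' p = π p)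

/-- Signed inverse transposition (type 1 or type 2): exchanges the two adjacent segments
`(π_i … π_{j−1})` and `(π_j … π_{k−1})` and additionally reverses (and negates) one of them. -/
def SInvTransp (n : ℕ) (π π' : ℕ → ℤ) : Prop :=
  ∃ i j k : ℕ, 1 ≤ i ∧ i < j ∧ j < k ∧ k ≤ n + 1 ∧
    (((∀ p : ℕ, i ≤ p → p < i + (k - j) → π' p = π (p + (j - i))) ∧
      (∀ p : ℕ, i + (k - j) ≤ p → p < k → π' p = - π (i + k - 1 - p))) ∨
     ((∀ p : ℕ, i ≤ p → p < i + (k - j) → π' p = - π (i + k - 1 - p)) ∧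
      (∀ p : ℕ, i + (k - j) ≤ p → p < k → π' p = π (p - (k - j))))) ∧
    (∀ p : ℕ, p < i ∨ k ≤ p → π' p = π p)

/-- Signed revrev `ρρ(i,j,k)`: reverses (and negates) each of the two adjacent segments
`(π_i … π_{j−1})` and `(π_j … π_{k−1})` in place, without exchanging them. -/
def SRevRev (n : ℕ) (π π' : ℕ → ℤ) : Prop :=
  ∃ i j k : ℕ, 1 ≤ i ∧ i < j ∧ j < k ∧ k ≤ n + 1 ∧
    (∀ p : ℕ, i ≤ p → p < j → π' p = - π (i + j - 1 - p)) ∧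
    (∀ p : ℕ, j ≤ p → p < k → π' p = - π (j + k - 1 - p)) ∧
    (∀ p : ℕ, p < i ∨ k ≤ p → π' p = π p)

/-- Unsigned reversal `ρ(i,j)`. -/
def URev (n : ℕ) (π π' : ℕ → ℕ) : Prop :=
  ∃ i j : ℕ, 1 ≤ i ∧ i ≤ j ∧ j ≤ n ∧
    (∀ p : ℕ, i ≤ p → p ≤ j → π' p = π (i + j - p)) ∧
    (∀ p : ℕ, p < i ∨ j < p → π' p = π p)

/-- Unsigned transposition `τ(i,j,k)`. -/
def UTransp (n : ℕ) (π π' : ℕ → ℕ) : Prop :=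
  ∃ i j k : ℕ, 1 ≤ i ∧ i < j ∧ j < k ∧ k ≤ n + 1 ∧
    (∀ p : ℕ, i ≤ p → p < i + (k - j) → π' p = π (p + (j - i))) ∧
    (∀ p : ℕ, i + (k - j) ≤ p → p < k → π' p = π (p - (k - j))) ∧
    (∀ p : ℕ, p < i ∨ k ≤ p → π' p = π p)

/-- Unsigned inverse transposition (type 1 or type 2). -/
def UInvTransp (n : ℕ) (π π' : ℕ → ℕ) : Prop :=
  ∃ i j k : ℕ, 1 ≤ i ∧ i < j ∧ j < k ∧ k ≤ n + 1 ∧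
    (((∀ p : ℕ, i ≤ p → p < i + (k - j) → π' p = π (p + (j - i))) ∧
      (∀ p : ℕ, i + (k - j) ≤ p → p < k → π' p = π (i + k - 1 - p))) ∨
     ((∀ p : ℕ, i ≤ p → p < i + (k - j) → π' p = π (i + k - 1 - p)) ∧
      (∀ p : ℕ, i + (k - j) ≤ p → p < k → π' p = π (p - (k - j))))) ∧
    (∀ p : ℕ, p < i ∨ k ≤ p → π' p = π p)

/-- Unsigned revrev `ρρ(i,j,k)`. -/
def URevRev (n : ℕ) (π π' : ℕ → ℕ) : Prop :=
  ∃ i j k : ℕ, 1 ≤ i ∧ i < j ∧ j < k ∧ k ≤ n + 1 ∧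
    (∀ p : ℕ, i ≤ p → p < j → π' p = π (i + j - 1 - p)) ∧
    (∀ p : ℕ, j ≤ p → p < k → π' p = π (j + k - 1 - p)) ∧
    (∀ p : ℕ, p < i ∨ k ≤ p → π' p = π p)

def sOpRel (n : ℕ) : RearrOp → (ℕ → ℤ) → (ℕ → ℤ) → Prop
  | RearrOp.rev => SRev n
  | RearrOp.transp => STransp n
  | RearrOp.invtransp => SInvTransp n
  | RearrOp.revrev => SRevRev n

def uOpRel (n : ℕ) : RearrOp → (ℕ → ℕ) → (ℕ → ℕ) → Prop
  | RearrOp.rev => URev n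
  | RearrOp.transp => UTransp n
  | RearrOp.invtransp => UInvTransp n
  | RearrOp.revrev => URevRev n

/-- The list of operations `l` transforms the signed permutation `π` into the identity. -/
def SSorts (n : ℕ) : List RearrOp → (ℕ → ℤ) → Prop
  | [], π => ∀ p : ℕ, p ≤ n + 1 → π p = (p : ℤ)
  | op :: l, π => ∃ π' : ℕ → ℤ, sOpRel n op π π' ∧ SSorts n l π'

/-- The list of operations `l` transforms the unsigned permutation `π` into the identity. -/
def USorts (n : ℕ) : List RearrOp → (ℕ → ℕ) → Prop
  | [], π => ∀ p : ℕ, p ≤ n + 1 → π p = p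
  | op :: l, π => ∃ π' : ℕ → ℕ, uOpRel n op π π' ∧ USorts n l π'

/-- A sequence of `s` (unsigned) transpositions transforms `π` into the identity. -/
def UTranspSorts (n : ℕ) : ℕ → (ℕ → ℕ) → Prop
  | 0, π => ∀ p : ℕ, p ≤ n + 1 → π p = p
  | s + 1, π => ∃ π' : ℕ → ℕ, UTransp n π π' ∧ UTranspSorts n s π'

/-- The cost of an operation: `wr` for a reversal, `wt` for a transposition,
inverse transposition or revrev. -/
noncomputable def opCost (wr wt : ℝ) (op : RearrOp) : ENNReal :=
  if op = RearrOp.rev then ENNReal.ofReal wr else ENNReal.ofReal wt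

/-- The total cost of a sequence of operations. -/
noncomputable def seqCost (wr wt : ℝ) (l : List RearrOp) : ENNReal :=
  (l.map (opCost wr wt)).sum

/-- The weighted distance `d^w_M(π)` for a signed permutation `π`: the minimum total cost
of a sequence of operations from the model `M` transforming `π` into the identity
(`∞` if no such sequence exists). -/
noncomputable def sWDist (n : ℕ) (M : Set RearrOp) (wr wt : ℝ) (π : ℕ → ℤ) : ENNReal :=
  sInf {c : ENNReal |
    ∃ l : List RearrOp, (∀ op ∈ l, op ∈ M) ∧ SSorts n l π ∧ c = seqCost wr wt l}

/-- The weighted distance `d^w_M(π)` for an unsigned permutation `π`. -/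
noncomputable def uWDist (n : ℕ) (M : Set RearrOp) (wr wt : ℝ) (π : ℕ → ℕ) : ENNReal :=
  sInf {c : ENNReal |
    ∃ l : List RearrOp, (∀ op ∈ l, op ∈ M) ∧ USorts n l π ∧ c = seqCost wr wt l}

/-- `b(π)`: number of (signed) breakpoints of the signed permutation `π`. -/
def bS (n : ℕ) (π : ℕ → ℤ) : ℕ :=
  ((Finset.range (n + 1)).filter (fun i => π (i + 1) - π i ≠ 1)).card

/-- `b(π)`: number of unsigned-reversal breakpoints, i.e. pairs with `|π_{i+1} − π_i| ≠ 1`. -/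
def bU (n : ℕ) (π : ℕ → ℕ) : ℕ :=
  ((Finset.range (n + 1)).filter
    (fun i => ¬ (π (i + 1) = π i + 1 ∨ π i = π (i + 1) + 1))).card

/-- `b_τ(π)`: number of transposition breakpoints, i.e. pairs with `π_{i+1} − π_i ≠ 1`. -/
def bTU (n : ℕ) (π : ℕ → ℕ) : ℕ :=
  ((Finset.range (n + 1)).filter (fun i => π (i + 1) ≠ π i + 1)).card

def M1 : Set RearrOp := {RearrOp.transp, RearrOp.invtransp}
def M2 : Set RearrOp := {RearrOp.rev, RearrOp.transp, RearrOp.invtransp}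
def M3 : Set RearrOp := {RearrOp.transp, RearrOp.revrev}
def M4 : Set RearrOp := {RearrOp.rev, RearrOp.transp, RearrOp.revrev}
def M5 : Set RearrOp := {RearrOp.transp, RearrOp.invtransp, RearrOp.revrev}
def M6 : Set RearrOp := {RearrOp.rev, RearrOp.transp, RearrOp.invtransp, RearrOp.revrev}

lemma bU_le_helper (n : ℕ) (π π' : ℕ → ℕ) (g : ℕ → ℕ) (E : Finset ℕ)
    (hmap : ∀ q, q < n + 1 → q ∉ E →
      ¬(π (q+1) = π q + 1 ∨ π q = π (q+1) + 1) →
      g q < n + 1 ∧ ¬(π' (g q + 1) = π' (g q) + 1 ∨ π' (g q) = π' (g q + 1) + 1))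
    (hinj : ∀ q1 q2, q1 ∉ E → q2 ∉ E → g q1 = g q2 → q1 = q2) :
    bU n π ≤ bU n π' + E.card := by
  unfold bU
  refine le_trans (Finset.card_le_card_sdiff_add_card (t := E)) ?_
  refine Nat.add_le_add_right ?_ _
  apply Finset.card_le_card_of_injOn g
  · intro a ha
    simp only [Finset.mem_coe, Finset.mem_sdiff, Finset.mem_filter, Finset.mem_range] at ha ⊢
    exact ⟨(hmap a ha.1.1 ha.2 ha.1.2).1, (hmap a ha.1.1 ha.2 ha.1.2).2⟩
  · intro a ha b hb hab
    simp only [Finset.coe_sdiff, Set.mem_diff, Finset.mem_coe, Finset.mem_filter] at ha hb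
    exact hinj a b ha.2 hb.2 hab

lemma bU_rev (n : ℕ) (π π' : ℕ → ℕ) (i j : ℕ) (h1 : 1 ≤ i) (h2 : i ≤ j) (h3 : j ≤ n)
    (hin : ∀ p : ℕ, i ≤ p → p ≤ j → π' p = π (i + j - p))
    (hout : ∀ p : ℕ, p < i ∨ j < p → π' p = π p) :
    bU n π ≤ bU n π' + 2 := by
  have hE : ({i - 1, j} : Finset ℕ).card ≤ 2 := by
    refine le_trans (Finset.card_insert_le _ _) ?_
    simp
  refine le_trans (bU_le_helper n π π' (fun q => if i ≤ q ∧ q < j then i + j - 1 - q else q)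
    {i - 1, j} ?_ ?_) (by omega)
  · intro q hq hqE hbp
    simp only [Finset.mem_insert, Finset.mem_singleton] at hqE
    push_neg at hqE
    by_cases hc : i ≤ q ∧ q < j
    · rw [if_pos hc]
      have e1 : π' (i + j - 1 - q) = π (q + 1) := by
        rw [hin (i + j - 1 - q) (by omega) (by omega)]; congr 1; omega
      have e2 : π' (i + j - 1 - q + 1) = π q := by
        rw [hin (i + j - 1 - q + 1) (by omega) (by omega)]; congr 1; omega
      refine ⟨by omega, ?_⟩
      rw [e1, e2]
      tauto
    · rw [if_neg hc]
      have e1 : π' q = π q := hout q (by omega)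
      have e2 : π' (q + 1) = π (q + 1) := hout (q + 1) (by omega)
      rw [e1, e2]
      exact ⟨hq, hbp⟩
  · intro q1 q2 h1' h2' he
    simp only [Finset.mem_insert, Finset.mem_singleton] at h1' h2'
    push_neg at h1' h2'
    split_ifs at he <;> omega

lemma bU_transp (n : ℕ) (π π' : ℕ → ℕ) (i j k : ℕ)
    (h1 : 1 ≤ i) (h2 : i < j) (h3 : j < k) (h4 : k ≤ n + 1)
    (hinA : ∀ p : ℕ, i ≤ p → p < i + (k - j) → π' p = π (p + (j - i)))
    (hinB : ∀ p : ℕ, i + (k - j) ≤ p → p < k → π' p = π (p - (k - j)))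
    (hout : ∀ p : ℕ, p < i ∨ k ≤ p → π' p = π p) :
    bU n π ≤ bU n π' + 3 := by
  have hE : ({i - 1, j - 1, k - 1} : Finset ℕ).card ≤ 3 := by
    refine le_trans (Finset.card_insert_le _ _) ?_
    refine le_trans (Nat.add_le_add_right (Finset.card_insert_le _ _) 1) ?_
    simp
  refine le_trans (bU_le_helper n π π'
    (fun q => if i ≤ q ∧ q + 1 < j then q + (k - j)
      else if j ≤ q ∧ q + 1 < k then q - (j - i) else q)
    {i - 1, j - 1, k - 1} ?_ ?_) (by omega)
  · intro q hq hqE hbp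
    simp only [Finset.mem_insert, Finset.mem_singleton] at hqE
    push_neg at hqE
    by_cases hc1 : i ≤ q ∧ q + 1 < j
    · rw [if_pos hc1]
      have e1 : π' (q + (k - j)) = π q := by
        rw [hinB _ (by omega) (by omega)]; congr 1; omega
      have e2 : π' (q + (k - j) + 1) = π (q + 1) := by
        rw [hinB _ (by omega) (by omega)]; congr 1; omega
      refine ⟨by omega, ?_⟩
      rw [e1, e2]; exact hbp
    · rw [if_neg hc1]
      by_cases hc2 : j ≤ q ∧ q + 1 < k
      · rw [if_pos hc2]
        have e1 : π' (q - (j - i)) = π q := by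
          rw [hinA _ (by omega) (by omega)]; congr 1; omega
        have e2 : π' (q - (j - i) + 1) = π (q + 1) := by
          rw [hinA _ (by omega) (by omega)]; congr 1; omega
        refine ⟨by omega, ?_⟩
        rw [e1, e2]; exact hbp
      · rw [if_neg hc2]
        have e1 : π' q = π q := hout q (by omega)
        have e2 : π' (q + 1) = π (q + 1) := hout (q + 1) (by omega)
        rw [e1, e2]; exact ⟨hq, hbp⟩
  · intro q1 q2 h1' h2' he
    simp only [Finset.mem_insert, Finset.mem_singleton] at h1' h2'
    push_neg at h1' h2'
    split_ifs at he <;> omega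

lemma bU_invtransp1 (n : ℕ) (π π' : ℕ → ℕ) (i j k : ℕ)
    (h1 : 1 ≤ i) (h2 : i < j) (h3 : j < k) (h4 : k ≤ n + 1)
    (hinA : ∀ p : ℕ, i ≤ p → p < i + (k - j) → π' p = π (p + (j - i)))
    (hinB : ∀ p : ℕ, i + (k - j) ≤ p → p < k → π' p = π (i + k - 1 - p))
    (hout : ∀ p : ℕ, p < i ∨ k ≤ p → π' p = π p) :
    bU n π ≤ bU n π' + 3 := by
  have hE : ({i - 1, j - 1, k - 1} : Finset ℕ).card ≤ 3 := by
    refine le_trans (Finset.card_insert_le _ _) ?_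
    refine le_trans (Nat.add_le_add_right (Finset.card_insert_le _ _) 1) ?_
    simp
  refine le_trans (bU_le_helper n π π'
    (fun q => if i ≤ q ∧ q + 1 < j then i + k - 2 - q
      else if j ≤ q ∧ q + 1 < k then q - (j - i) else q)
    {i - 1, j - 1, k - 1} ?_ ?_) (by omega)
  · intro q hq hqE hbp
    simp only [Finset.mem_insert, Finset.mem_singleton] at hqE
    push_neg at hqE
    by_cases hc1 : i ≤ q ∧ q + 1 < j
    · rw [if_pos hc1]
      have e1 : π' (i + k - 2 - q) = π (q + 1) := by
        rw [hinB _ (by omega) (by omega)]; congr 1; omega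
      have e2 : π' (i + k - 2 - q + 1) = π q := by
        rw [hinB _ (by omega) (by omega)]; congr 1; omega
      refine ⟨by omega, ?_⟩
      rw [e1, e2]; tauto
    · rw [if_neg hc1]
      by_cases hc2 : j ≤ q ∧ q + 1 < k
      · rw [if_pos hc2]
        have e1 : π' (q - (j - i)) = π q := by
          rw [hinA _ (by omega) (by omega)]; congr 1; omega
        have e2 : π' (q - (j - i) + 1) = π (q + 1) := by
          rw [hinA _ (by omega) (by omega)]; congr 1; omega
        refine ⟨by omega, ?_⟩
        rw [e1, e2]; exact hbp
      · rw [if_neg hc2]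
        have e1 : π' q = π q := hout q (by omega)
        have e2 : π' (q + 1) = π (q + 1) := hout (q + 1) (by omega)
        rw [e1, e2]; exact ⟨hq, hbp⟩
  · intro q1 q2 h1' h2' he
    simp only [Finset.mem_insert, Finset.mem_singleton] at h1' h2'
    push_neg at h1' h2'
    split_ifs at he <;> omega

lemma bU_invtransp2 (n : ℕ) (π π' : ℕ → ℕ) (i j k : ℕ)
    (h1 : 1 ≤ i) (h2 : i < j) (h3 : j < k) (h4 : k ≤ n + 1)
    (hinA : ∀ p : ℕ, i ≤ p → p < i + (k - j) → π' p = π (i + k - 1 - p))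
    (hinB : ∀ p : ℕ, i + (k - j) ≤ p → p < k → π' p = π (p - (k - j)))
    (hout : ∀ p : ℕ, p < i ∨ k ≤ p → π' p = π p) :
    bU n π ≤ bU n π' + 3 := by
  have hE : ({i - 1, j - 1, k - 1} : Finset ℕ).card ≤ 3 := by
    refine le_trans (Finset.card_insert_le _ _) ?_
    refine le_trans (Nat.add_le_add_right (Finset.card_insert_le _ _) 1) ?_
    simp
  refine le_trans (bU_le_helper n π π'
    (fun q => if i ≤ q ∧ q + 1 < j then q + (k - j)
      else if j ≤ q ∧ q + 1 < k then i + k - 2 - q else q)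
    {i - 1, j - 1, k - 1} ?_ ?_) (by omega)
  · intro q hq hqE hbp
    simp only [Finset.mem_insert, Finset.mem_singleton] at hqE
    push_neg at hqE
    by_cases hc1 : i ≤ q ∧ q + 1 < j
    · rw [if_pos hc1]
      have e1 : π' (q + (k - j)) = π q := by
        rw [hinB _ (by omega) (by omega)]; congr 1; omega
      have e2 : π' (q + (k - j) + 1) = π (q + 1) := by
        rw [hinB _ (by omega) (by omega)]; congr 1; omega
      refine ⟨by omega, ?_⟩
      rw [e1, e2]; exact hbp
    · rw [if_neg hc1]
      by_cases hc2 : j ≤ q ∧ q + 1 < k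
      · rw [if_pos hc2]
        have e1 : π' (i + k - 2 - q) = π (q + 1) := by
          rw [hinA _ (by omega) (by omega)]; congr 1; omega
        have e2 : π' (i + k - 2 - q + 1) = π q := by
          rw [hinA _ (by omega) (by omega)]; congr 1; omega
        refine ⟨by omega, ?_⟩
        rw [e1, e2]; tauto
      · rw [if_neg hc2]
        have e1 : π' q = π q := hout q (by omega)
        have e2 : π' (q + 1) = π (q + 1) := hout (q + 1) (by omega)
        rw [e1, e2]; exact ⟨hq, hbp⟩
  · intro q1 q2 h1' h2' he
    simp only [Finset.mem_insert, Finset.mem_singleton] at h1' h2'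
    push_neg at h1' h2'
    split_ifs at he <;> omega

lemma bU_revrev (n : ℕ) (π π' : ℕ → ℕ) (i j k : ℕ)
    (h1 : 1 ≤ i) (h2 : i < j) (h3 : j < k) (h4 : k ≤ n + 1)
    (hinA : ∀ p : ℕ, i ≤ p → p < j → π' p = π (i + j - 1 - p))
    (hinB : ∀ p : ℕ, j ≤ p → p < k → π' p = π (j + k - 1 - p))
    (hout : ∀ p : ℕ, p < i ∨ k ≤ p → π' p = π p) :
    bU n π ≤ bU n π' + 3 := by
  have hE : ({i - 1, j - 1, k - 1} : Finset ℕ).card ≤ 3 := by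
    refine le_trans (Finset.card_insert_le _ _) ?_
    refine le_trans (Nat.add_le_add_right (Finset.card_insert_le _ _) 1) ?_
    simp
  refine le_trans (bU_le_helper n π π'
    (fun q => if i ≤ q ∧ q + 1 < j then i + j - 2 - q
      else if j ≤ q ∧ q + 1 < k then j + k - 2 - q else q)
    {i - 1, j - 1, k - 1} ?_ ?_) (by omega)
  · intro q hq hqE hbp
    simp only [Finset.mem_insert, Finset.mem_singleton] at hqE
    push_neg at hqE
    by_cases hc1 : i ≤ q ∧ q + 1 < j
    · rw [if_pos hc1]
      have e1 : π' (i + j - 2 - q) = π (q + 1) := by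
        rw [hinA _ (by omega) (by omega)]; congr 1; omega
      have e2 : π' (i + j - 2 - q + 1) = π q := by
        rw [hinA _ (by omega) (by omega)]; congr 1; omega
      refine ⟨by omega, ?_⟩
      rw [e1, e2]; tauto
    · rw [if_neg hc1]
      by_cases hc2 : j ≤ q ∧ q + 1 < k
      · rw [if_pos hc2]
        have e1 : π' (j + k - 2 - q) = π (q + 1) := by
          rw [hinB _ (by omega) (by omega)]; congr 1; omega
        have e2 : π' (j + k - 2 - q + 1) = π q := by
          rw [hinB _ (by omega) (by omega)]; congr 1; omega
        refine ⟨by omega, ?_⟩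
        rw [e1, e2]; tauto
      · rw [if_neg hc2]
        have e1 : π' q = π q := hout q (by omega)
        have e2 : π' (q + 1) = π (q + 1) := hout (q + 1) (by omega)
        rw [e1, e2]; exact ⟨hq, hbp⟩
  · intro q1 q2 h1' h2' he
    simp only [Finset.mem_insert, Finset.mem_singleton] at h1' h2'
    push_neg at h1' h2'
    split_ifs at he <;> omega

lemma bU_step (n : ℕ) (op : RearrOp) (π π' : ℕ → ℕ) (h : uOpRel n op π π') :
    bU n π ≤ bU n π' + (if op = RearrOp.rev then 2 else 3) := by
  cases op with
  | rev =>
    obtain ⟨i, j, h1, h2, h3, hin, hout⟩ := h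
    simpa using bU_rev n π π' i j h1 h2 h3 hin hout
  | transp =>
    obtain ⟨i, j, k, h1, h2, h3, h4, hA, hB, hout⟩ := h
    simpa using bU_transp n π π' i j k h1 h2 h3 h4 hA hB hout
  | invtransp =>
    obtain ⟨i, j, k, h1, h2, h3, h4, hAB, hout⟩ := h
    rcases hAB with ⟨hA, hB⟩ | ⟨hA, hB⟩
    · simpa using bU_invtransp1 n π π' i j k h1 h2 h3 h4 hA hB hout
    · simpa using bU_invtransp2 n π π' i j k h1 h2 h3 h4 hA hB hout
  | revrev =>
    obtain ⟨i, j, k, h1, h2, h3, h4, hA, hB, hout⟩ := h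
    simpa using bU_revrev n π π' i j k h1 h2 h3 h4 hA hB hout

lemma sorts_bound (n : ℕ) (wr wt : ℝ) (hwr : 0 < wr) (hwt : 0 < wt) :
    ∀ (l : List RearrOp) (π : ℕ → ℕ), USorts n l π →
      ENNReal.ofReal (min (wr / 2) (wt / 3) * (bU n π : ℝ)) ≤ seqCost wr wt l := by
  intro l
  induction l with
  | nil =>
    intro π h
    have hb : bU n π = 0 := by
      unfold bU
      refine Finset.card_eq_zero.mpr (Finset.filter_eq_empty_iff.mpr ?_)
      intro q hq
      simp only [Finset.mem_range] at hq
      rw [h q (by omega), h (q + 1) (by omega)]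
      simp
    rw [hb]
    simp [seqCost]
  | cons op l ih =>
    intro π h
    obtain ⟨π', hop, hrest⟩ := h
    have hstep := bU_step n op π π' hop
    have hm0 : (0:ℝ) ≤ min (wr / 2) (wt / 3) := le_min (by linarith) (by linarith)
    have hstep' : (bU n π : ℝ) ≤ (bU n π' : ℝ) + (if op = RearrOp.rev then (2:ℝ) else 3) := by
      split_ifs at hstep ⊢ <;> exact_mod_cast hstep
    have hc : ENNReal.ofReal (min (wr / 2) (wt / 3) *
        ((if op = RearrOp.rev then (2:ℝ) else 3))) ≤ opCost wr wt op := by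
      unfold opCost
      split_ifs
      · exact ENNReal.ofReal_le_ofReal (by
          have := min_le_left (wr / 2) (wt / 3); nlinarith)
      · exact ENNReal.ofReal_le_ofReal (by
          have := min_le_right (wr / 2) (wt / 3); nlinarith)
    have hcons : seqCost wr wt (op :: l) = opCost wr wt op + seqCost wr wt l := by
      simp [seqCost]
    calc ENNReal.ofReal (min (wr / 2) (wt / 3) * (bU n π : ℝ))
        ≤ ENNReal.ofReal (min (wr / 2) (wt / 3) * ((bU n π' : ℝ)
            + (if op = RearrOp.rev then (2:ℝ) else 3))) := by
          exact ENNReal.ofReal_le_ofReal (mul_le_mul_of_nonneg_left hstep' hm0)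
      _ = ENNReal.ofReal (min (wr / 2) (wt / 3) * (bU n π' : ℝ))
            + ENNReal.ofReal (min (wr / 2) (wt / 3)
              * (if op = RearrOp.rev then (2:ℝ) else 3)) := by
          rw [mul_add, ENNReal.ofReal_add (by positivity) (by positivity)]
      _ ≤ seqCost wr wt l + opCost wr wt op := add_le_add (ih π' hrest) hc
      _ = seqCost wr wt (op :: l) := by rw [hcons, add_comm]

/-- For every unsigned permutation `π` of size `n`, all positive weights
`w_ρ` and `w_τ`, and every rearrangement model `M ∈ {M1, …, M6}` (with unsigned
operations), the weighted sorting distance satisfies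
`d^w_M(π) ≥ min{w_ρ/2, w_τ/3} · b(π)`, where `b(π)` is the number of unsigned-reversal
breakpoints of `π`. -/
theorem weighted_unsigned_breakpoint_lower_bound
    (n : ℕ) (π : ℕ → ℕ) (hπ : IsUPerm n π)
    (wr wt : ℝ) (hwr : 0 < wr) (hwt : 0 < wt)
    (M : Set RearrOp)
    (hM : M = M1 ∨ M = M2 ∨ M = M3 ∨ M = M4 ∨ M = M5 ∨ M = M6) :
    ENNReal.ofReal (min (wr / 2) (wt / 3) * (bU n π : ℝ)) ≤ uWDist n M wr wt π := by
  refine le_sInf ?_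
  rintro c ⟨l, hlM, hsort, rfl⟩
  exact sorts_bound n wr wt hwr hwt l π hsort
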